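/- Let n ≥ 1. For every Cayley permutation x of length n, Γ(id, x) is a permutation of {1,…,n}, and it is the unique permutation v ∈ S_n such that x belongs to the Fishburn basis of v. Consequently Cay[n] is the disjoint union over v ∈ S_n of the Fishburn bases basis(v). -/

import Mathlib

namespace CayPaper

/-- A word of length `n` (1-indexed): it vanishes outside `{1,…,n}`. -/
def IsWord (n : ℕ) (v : ℕ → ℕ) : Prop := ∀ i, i ∉ Set.Icc 1 n → v i = 0

/-- A Cayley permutation of length `n`: a word on `{1,…,n}` whose image is `{1,…,k}`
for some `k ≤ n`. -/
def IsCayley (n : ℕ) (v : ℕ → ℕ) : Prop :=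
  IsWord n v ∧ ∃ k, v '' Set.Icc 1 n = Set.Icc 1 k

/-- A weakly increasing Cayley permutation of length `n`. -/
def IsWI (n : ℕ) (v : ℕ → ℕ) : Prop :=
  IsCayley n v ∧ MonotoneOn v (Set.Icc 1 n)

/-- A permutation of `{1,…,n}`, encoded as a word. -/
def IsPermWord (n : ℕ) (v : ℕ → ℕ) : Prop :=
  IsWord n v ∧ Set.BijOn v (Set.Icc 1 n) (Set.Icc 1 n)

/-- The weak descent set `Des(v) = { i ∈ {1,…,n−1} : v(i) ≥ v(i+1) }`. -/
def desSet (n : ℕ) (v : ℕ → ℕ) : Finset ℕ :=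
  (Finset.Icc 1 (n - 1)).filter fun i => v (i + 1) ≤ v i

/-- The strict descent set `Des∘(v) = { i : v(i) > v(i+1) }`. -/
def sdesSet (n : ℕ) (v : ℕ → ℕ) : Finset ℕ :=
  (Finset.Icc 1 (n - 1)).filter fun i => v (i + 1) < v i

/-- The weak ascent set `Asc(v) = { i : v(i) ≤ v(i+1) }`. -/
def ascSet (n : ℕ) (v : ℕ → ℕ) : Finset ℕ :=
  (Finset.Icc 1 (n - 1)).filter fun i => v i ≤ v (i + 1)

/-- The strict ascent set `Asc∘(v) = { i : v(i) < v(i+1) }`. -/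
def sascSet (n : ℕ) (v : ℕ → ℕ) : Finset ℕ :=
  (Finset.Icc 1 (n - 1)).filter fun i => v i < v (i + 1)

def des (n : ℕ) (v : ℕ → ℕ) : ℕ := (desSet n v).card
def sdes (n : ℕ) (v : ℕ → ℕ) : ℕ := (sdesSet n v).card
def asc (n : ℕ) (v : ℕ → ℕ) : ℕ := (ascSet n v).card
def sasc (n : ℕ) (v : ℕ → ℕ) : ℕ := (sascSet n v).card

/-- The maximum value of a word. -/
def wmax (n : ℕ) (v : ℕ → ℕ) : ℕ := (Finset.Icc 1 n).sup v

/-- Reverse: `v^r(i) = v(n+1−i)`. -/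
def wrev (n : ℕ) (v : ℕ → ℕ) : ℕ → ℕ := fun i =>
  if 1 ≤ i ∧ i ≤ n then v (n + 1 - i) else 0

/-- Complement: `v^c(i) = max(v)+1−v(i)`. -/
def wcomp (n : ℕ) (v : ℕ → ℕ) : ℕ → ℕ := fun i =>
  if 1 ≤ i ∧ i ≤ n then wmax n v + 1 - v i else 0

/-- The word `(σ(1), …, σ(n))` (1-indexed) of a permutation `σ` of `Fin n`. -/
def permWord (n : ℕ) (σ : Equiv.Perm (Fin n)) : ℕ → ℕ := fun i =>
  if h : 1 ≤ i ∧ i ≤ n then ((σ ⟨i - 1, by omega⟩ : Fin n) : ℕ) + 1 else 0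

/-- The conjugate of `u`: the unique weakly increasing Cayley permutation of
length `n` whose descent set is `{1,…,n−1} \ Des(u)`. -/
noncomputable def conjWI (n : ℕ) (u : ℕ → ℕ) : ℕ → ℕ :=
  haveI := Classical.dec (∃ w, IsWI n w ∧ desSet n w = Finset.Icc 1 (n - 1) \ desSet n u)
  if h : ∃ w, IsWI n w ∧ desSet n w = Finset.Icc 1 (n - 1) \ desSet n u
    then h.choose else fun _ => 0

/-- A Burge matrix: every row and every column contains a nonzero entry. -/
def IsBurge {p q : ℕ} (M : Matrix (Fin p) (Fin q) ℕ) : Prop :=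
  (∀ i, ∃ j, M i j ≠ 0) ∧ (∀ j, ∃ i, M i j ≠ 0)

/-- The size of a matrix with natural entries: the sum of its entries. -/
def matSize {p q : ℕ} (M : Matrix (Fin p) (Fin q) ℕ) : ℕ := ∑ i, ∑ j, M i j

/-- Burge matrices of size `n` (of all dimensions). -/
def BurgeMatrices (n : ℕ) : Set (Σ p : ℕ, Σ q : ℕ, Matrix (Fin p) (Fin q) ℕ) :=
  {M | IsBurge M.2.2 ∧ matSize M.2.2 = n}

/-- Binary Burge matrices of size `n`. -/
def BinaryBurgeMatrices (n : ℕ) : Set (Σ p : ℕ, Σ q : ℕ, Matrix (Fin p) (Fin q) ℕ) :=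
  {M | M ∈ BurgeMatrices n ∧ ∀ i j, M.2.2 i j ≤ 1}

/-- Burge matrices of size `n` whose every column sums to `1`. -/
def ColSumOneBurgeMatrices (n : ℕ) : Set (Σ p : ℕ, Σ q : ℕ, Matrix (Fin p) (Fin q) ℕ) :=
  {M | M ∈ BurgeMatrices n ∧ ∀ j, ∑ i, M.2.2 i j = 1}

/-- Burge words: pairs `(u,v) ∈ WI[n] × Cay[n]` with `Des(u) ⊆ Des(v)`. -/
def BurPairs (n : ℕ) : Set ((ℕ → ℕ) × (ℕ → ℕ)) :=
  {p | IsWI n p.1 ∧ IsCayley n p.2 ∧ desSet n p.1 ⊆ desSet n p.2}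

/-- Pairs `(u,v) ∈ WI[n] × Cay[n]` with `Des(u) ⊆ Des∘(v)`. -/
def BBurPairs (n : ℕ) : Set ((ℕ → ℕ) × (ℕ → ℕ)) :=
  {p | IsWI n p.1 ∧ IsCayley n p.2 ∧ desSet n p.1 ⊆ sdesSet n p.2}

/-- Pairs `(u,v) ∈ WI[n] × S_n` with `Des(u) ⊆ Des(v)`. -/
def PBurPairs (n : ℕ) : Set ((ℕ → ℕ) × (ℕ → ℕ)) :=
  {p | IsWI n p.1 ∧ IsPermWord n p.2 ∧ desSet n p.1 ⊆ desSet n p.2}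

/-- `Ω[n]`: pairs `(u,v) ∈ WI[n] × Cay[n]` with `Des(u) ⊇ Des(v)`. -/
def OmegaPairs (n : ℕ) : Set ((ℕ → ℕ) × (ℕ → ℕ)) :=
  {p | IsWI n p.1 ∧ IsCayley n p.2 ∧ desSet n p.2 ⊆ desSet n p.1}

/-- `v` lists the positions `1,…,n` in the order obtained by sorting the columns
`(x_i, i)` so that first components are weakly increasing, ties broken by strictly
decreasing second components.  For a permutation word `v` this says exactly that
`v = Γ(id, x)`, the bottom row of the Burge transpose of `(id, x)`. -/
def sortsColumns (n : ℕ) (x v : ℕ → ℕ) : Prop :=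
  ∀ i ∈ Finset.Icc 1 (n - 1),
    x (v i) < x (v (i + 1)) ∨ (x (v i) = x (v (i + 1)) ∧ v (i + 1) < v i)

/-- The Fishburn basis of a permutation word `v`:
`basis(v) = { x ∈ Cay[n] : Γ(id, x) = v }`. -/
def fishburnBasis (n : ℕ) (v : ℕ → ℕ) : Set (ℕ → ℕ) :=
  {x | IsCayley n x ∧ sortsColumns n x v}

/-- Stanley's `v`-compatibility condition:
`x(v(1)) ≤ ⋯ ≤ x(v(n))` with strict inequality at every ascent of `v`. -/
def VCompatible (n : ℕ) (v x : ℕ → ℕ) : Prop :=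
  (∀ i ∈ Finset.Icc 1 (n - 1), x (v i) ≤ x (v (i + 1))) ∧
    ∀ i ∈ Finset.Icc 1 (n - 1), v i < v (i + 1) → x (v i) < x (v (i + 1))

/-- A map `{1,…,n} → {1,…,m}`, encoded as a word. -/
def IsMapTo (n m : ℕ) (x : ℕ → ℕ) : Prop :=
  IsWord n x ∧ ∀ i ∈ Set.Icc 1 n, x i ∈ Set.Icc 1 m

/-- Weakly increasing maps `{1,…,n} → {1,…,m}`. -/
def WIgen (n m : ℕ) : Set (ℕ → ℕ) :=
  {u | IsMapTo n m u ∧ MonotoneOn u (Set.Icc 1 n)}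


-- auxiliary
private def bkey (x : ℕ → ℕ) (n i : ℕ) : ℕ ×ₗ ℕ := toLex (x i, n - i)

private lemma bkey_injOn (x : ℕ → ℕ) (n : ℕ) :
    Set.InjOn (bkey x n) (Set.Icc 1 n) := by
  intro a ha b hb h
  have h2 : n - a = n - b := congrArg (fun p => (ofLex p).2) h
  simp only [Set.mem_Icc] at ha hb
  omega

private lemma bkey_lt_iff {x : ℕ → ℕ} {n a b : ℕ} (ha : a ∈ Set.Icc 1 n)
    (hb : b ∈ Set.Icc 1 n) :
    bkey x n a < bkey x n b ↔ (x a < x b ∨ (x a = x b ∧ b < a)) := by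
  rw [bkey, bkey, Prod.Lex.lt_iff]
  simp only [Set.mem_Icc] at ha hb
  constructor
  · rintro (h | ⟨h1, h2⟩)
    · exact Or.inl h
    · exact Or.inr ⟨h1, by have h2' : n - a < n - b := h2; omega⟩
  · rintro (h | ⟨h1, h2⟩)
    · exact Or.inl h
    · exact Or.inr ⟨h1, by show n - a < n - b; omega⟩

private lemma strictMonoFin {α : Type*} [Preorder α] {n : ℕ} {f : Fin n → α}
    (h : ∀ i : ℕ, (hi : i + 1 < n) → f ⟨i, by omega⟩ < f ⟨i + 1, hi⟩) :
    StrictMono f := by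
  intro a b hab
  obtain ⟨b, hb⟩ := b
  rw [Fin.lt_def] at hab
  simp only at hab
  induction b with
  | zero => omega
  | succ k ih =>
    rcases Nat.lt_or_ge a.1 k with h1 | h1
    · exact lt_trans (ih (by omega) h1) (h k hb)
    · have ha : a = ⟨k, by omega⟩ := Fin.ext (show a.1 = k by omega)
      rw [ha]
      exact h k hb

private def bset (x : ℕ → ℕ) (n : ℕ) : Finset (ℕ ×ₗ ℕ) :=
  (Finset.Icc 1 n).image (bkey x n)

private lemma bset_card (x : ℕ → ℕ) (n : ℕ) (hn : 1 ≤ n) : (bset x n).card = n := by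
  rw [bset, Finset.card_image_of_injOn (by rw [Finset.coe_Icc]; exact bkey_injOn x n),
    Nat.card_Icc]
  omega

/-- Existence and uniqueness of the sorting permutation. -/
private lemma exists_unique_sorter (n : ℕ) (hn : 1 ≤ n) (x : ℕ → ℕ) :
    ∃! v : ℕ → ℕ, IsPermWord n v ∧ sortsColumns n x v := by
  set t := bset x n with ht_def
  have ht : t.card = n := bset_card x n hn
  set e := t.orderEmbOfFin ht with he_def
  classical
  set v : ℕ → ℕ := fun j => if h : 1 ≤ j ∧ j ≤ n then n - (ofLex (e ⟨j - 1, by omega⟩)).2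
    else 0 with hv_def
  -- main property
  have hv : ∀ j, 1 ≤ j → j ≤ n → ∀ (hj : j - 1 < n),
      v j ∈ Set.Icc 1 n ∧ bkey x n (v j) = e ⟨j - 1, hj⟩ := by
    intro j hj1 hj2 hj
    have hmem : e ⟨j - 1, hj⟩ ∈ t := Finset.orderEmbOfFin_mem t ht _
    rw [ht_def, bset, Finset.mem_image] at hmem
    obtain ⟨i, hi, hkey⟩ := hmem
    simp only [Finset.mem_Icc] at hi
    have h2 : (ofLex (e ⟨j - 1, hj⟩)).2 = n - i := by
      rw [← hkey]; rfl
    have hvj : v j = i := by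
      rw [hv_def]; simp only [hj1, hj2, and_self, dif_pos]
      rw [h2]; omega
    rw [hvj]
    exact ⟨Set.mem_Icc.mpr ⟨hi.1, hi.2⟩, hkey⟩
  have hword : IsWord n v := by
    intro i hi
    have hni : ¬(1 ≤ i ∧ i ≤ n) := by
      simp only [Set.mem_Icc, not_and_or, not_le] at hi
      omega
    rw [hv_def]
    exact dif_neg hni
  have hmaps : Set.MapsTo v (Set.Icc 1 n) (Set.Icc 1 n) := by
    intro j hj
    rw [Set.mem_Icc] at hj
    exact (hv j hj.1 hj.2 (by omega)).1
  have hinj : Set.InjOn v (Set.Icc 1 n) := by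
    intro a ha b hb hab
    rw [Set.mem_Icc] at ha hb
    have h1 := (hv a ha.1 ha.2 (by omega)).2
    have h2 := (hv b hb.1 hb.2 (by omega)).2
    rw [hab] at h1
    have := (t.orderEmbOfFin ht).injective (h1.symm.trans h2)
    have : a - 1 = b - 1 := congrArg Fin.val this
    omega
  have hsurj : Set.SurjOn v (Set.Icc 1 n) (Set.Icc 1 n) := by
    intro i hi
    have hkt : bkey x n i ∈ t := by
      rw [ht_def, bset, Finset.mem_image]
      exact ⟨i, by simpa [Finset.mem_Icc, Set.mem_Icc] using hi, rfl⟩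
    have : bkey x n i ∈ Set.range e := by
      rw [he_def, Finset.range_orderEmbOfFin]; exact_mod_cast hkt
    obtain ⟨j, hj⟩ := this
    have hj1 : (1 : ℕ) ≤ j.1 + 1 := by omega
    have hj2 : j.1 + 1 ≤ n := by omega
    have hvp := hv (j.1 + 1) hj1 hj2 (by omega)
    have heq : bkey x n (v (j.1 + 1)) = bkey x n i := by
      have hje : (⟨j.1 + 1 - 1, by omega⟩ : Fin n) = j := Fin.ext (by simp)
      rw [hvp.2]
      exact (congrArg e hje).trans hj
    have := bkey_injOn x n hvp.1 hi heq
    exact ⟨j.1 + 1, Set.mem_Icc.mpr ⟨hj1, hj2⟩, this⟩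
  have hsort : sortsColumns n x v := by
    intro i hi
    simp only [Finset.mem_Icc] at hi
    have h1 := hv i hi.1 (by omega) (by omega)
    have h2 := hv (i + 1) (by omega) (by omega) (by omega)
    have hlt : e ⟨i - 1, by omega⟩ < e ⟨i + 1 - 1, by omega⟩ := by
      exact (t.orderEmbOfFin ht).strictMono (Fin.mk_lt_mk.mpr (by omega))
    rw [← h1.2, ← h2.2] at hlt
    exact (bkey_lt_iff h1.1 h2.1).mp hlt
  refine ⟨v, ⟨⟨hword, hmaps, hinj, hsurj⟩, hsort⟩, ?_⟩
  -- uniqueness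
  intro w hw
  -- show any sorter equals v; prove via orderEmbOfFin_unique
  have key_eq : ∀ u : ℕ → ℕ, IsPermWord n u → sortsColumns n x u →
      ∀ j : Fin n, bkey x n (u (j.1 + 1)) = e j := by
    intro u hu hs
    have hmem : ∀ j : Fin n, u (j.1 + 1) ∈ Set.Icc 1 n :=
      fun j => hu.2.1 (Set.mem_Icc.mpr ⟨by omega, by omega⟩)
    have hmono : StrictMono (fun j : Fin n => bkey x n (u (j.1 + 1))) := by
      apply strictMonoFin
      intro i hi
      simp only []
      have := hs (i + 1) (Finset.mem_Icc.mpr ⟨by omega, by omega⟩)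
      exact (bkey_lt_iff (hmem ⟨i, by omega⟩) (hmem ⟨i + 1, hi⟩)).mpr this
    have hin : ∀ j : Fin n, bkey x n (u (j.1 + 1)) ∈ t := by
      intro j
      rw [ht_def, bset, Finset.mem_image]
      exact ⟨u (j.1 + 1), by simpa [Finset.mem_Icc, Set.mem_Icc] using hmem j, rfl⟩
    have := Finset.orderEmbOfFin_unique ht hin hmono
    exact fun j => congrFun this j
  have hval : ∀ u : ℕ → ℕ, IsPermWord n u → sortsColumns n x u → u = v := by
    intro u hu hs
    funext i
    by_cases hi : i ∈ Set.Icc 1 n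
    · rw [Set.mem_Icc] at hi
      have h1 := key_eq u hu hs ⟨i - 1, by omega⟩
      have h2 := key_eq v ⟨hword, hmaps, hinj, hsurj⟩ hsort ⟨i - 1, by omega⟩
      have hi' : i - 1 + 1 = i := by omega
      rw [hi'] at h1 h2
      exact bkey_injOn x n (hu.2.1 (Set.mem_Icc.mpr hi))
        (hmaps (Set.mem_Icc.mpr hi)) (h1.trans h2.symm)
    · rw [hu.1 i hi, hword i hi]
  exact hval w hw.1 hw.2

/-- For every Cayley permutation `x` there is a unique permutation `v` with
`x ∈ basis(v)` (namely `v = Γ(id,x)`); consequently `Cay[n]` is the disjoint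
union of the Fishburn bases. -/
theorem stmt7 (n : ℕ) (hn : 1 ≤ n) :
    (∀ x : ℕ → ℕ, IsCayley n x →
      ∃! v : ℕ → ℕ, IsPermWord n v ∧ x ∈ fishburnBasis n v) ∧
    {x : ℕ → ℕ | IsCayley n x}
      = ⋃ v ∈ {v : ℕ → ℕ | IsPermWord n v}, fishburnBasis n v := by
  constructor
  · intro x hx
    obtain ⟨v, ⟨hv1, hv2⟩, hu⟩ := exists_unique_sorter n hn x
    exact ⟨v, ⟨hv1, hx, hv2⟩, fun w hw => hu w ⟨hw.1, hw.2.2⟩⟩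
  · ext x
    simp only [Set.mem_setOf_eq, Set.mem_iUnion, fishburnBasis, Set.mem_setOf_eq]
    constructor
    · intro hx
      obtain ⟨v, ⟨hv1, hv2⟩, _⟩ := exists_unique_sorter n hn x
      exact ⟨v, hv1, hx, hv2⟩
    · rintro ⟨v, _, hx, _⟩
      exact hx


end CayPaper
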